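/- arXiv:1105.5539 — 7 statements merged into one kernel-verified Lean document; each statement's English description precedes it below -/
import Mathlib

section
/- Let P be a monoid which is a submonoid of a group G. For p₁, q₁, …, p_m, q_m ∈ P with p₁⁻¹q₁ ⋯ p_m⁻¹q_m = e in G, the product of operators V_{p₁}* V_{q₁} ⋯ V_{p_m}* V_{q_m} on ℓ²(P) equals the orthogonal projection E_X onto ℓ²(X), where X = q_m⁻¹ p_m ⋯ q₁⁻¹ p₁ P (compositions of image and preimage maps of left multiplications applied to P). -/
noncomputable section

open scoped InnerProductSpace ComplexConjugate

namespace Stmt5Aux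

variable {P : Type*} [Monoid P] [DecidableEq P]

local notation "H" => lp (fun _ : P => ℂ) 2

/-- abbreviation for basis vector -/
def ε (x : P) : lp (fun _ : P => ℂ) 2 := lp.single 2 x (1 : ℂ)

lemma coord (f : lp (fun _ : P => ℂ) 2) (y : P) :
    (⟪ε y, f⟫_ℂ) = f y := by
  rw [ε, lp.inner_single_left]
  simp [inner]

lemma ext_coord {f g : lp (fun _ : P => ℂ) 2}
    (h : ∀ y : P, (⟪ε y, f⟫_ℂ) = ⟪ε y, g⟫_ℂ) : f = g := by
  apply lp.ext
  funext y
  have := h y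
  rwa [coord, coord] at this

lemma inner_eps (x y : P) : (⟪ε x, ε y⟫_ℂ) = if y = x then 1 else 0 := by
  rw [coord]
  by_cases h : y = x
  · subst h; rw [if_pos rfl, ε, lp.single_apply_self]
  · rw [if_neg h, ε]
    exact lp.single_apply_ne (E := fun _ : P => ℂ) 2 y (1:ℂ) (fun hxy => h hxy.symm)

lemma adjoint_eps_eq {r y w : P} (hinj : ∀ a b : P, r * a = r * b → a = b)
    (V : lp (fun _ : P => ℂ) 2 →L[ℂ] lp (fun _ : P => ℂ) 2)
    (hV : ∀ x : P, V (ε x) = ε (r * x)) (hw : w = r * y) :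
    ContinuousLinearMap.adjoint V (ε w) = ε y := by
  apply ext_coord
  intro u
  rw [ContinuousLinearMap.adjoint_inner_right, hV, inner_eps, inner_eps, hw]
  by_cases h : u = y
  · subst h; simp
  · rw [if_neg (fun hr => h ((hinj y u hr).symm)), if_neg (fun hyu => h hyu.symm)]

lemma adjoint_eps_zero {r w : P}
    (V : lp (fun _ : P => ℂ) 2 →L[ℂ] lp (fun _ : P => ℂ) 2)
    (hV : ∀ x : P, V (ε x) = ε (r * x)) (hw : ∀ y : P, r * y ≠ w) :
    ContinuousLinearMap.adjoint V (ε w) = 0 := by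
  apply ext_coord
  intro u
  rw [ContinuousLinearMap.adjoint_inner_right, hV, inner_eps]
  rw [if_neg (fun h => hw u h.symm)]
  simp

end Stmt5Aux

open Stmt5Aux

/-- Let `P` be a submonoid of a group `G` (given by an injective monoid
homomorphism `φ : P →* G`). If `p₁, q₁, …, p_m, q_m ∈ P` satisfy
`p₁⁻¹q₁ ⋯ p_m⁻¹q_m = e` in `G`, then `V_{p₁}* V_{q₁} ⋯ V_{p_m}* V_{q_m} = E_X` on `ℓ²(P)`,
where `X = q_m⁻¹ p_m ⋯ q₁⁻¹ p₁ P` (compositions of image and preimage maps of left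
multiplications applied to `P`). -/
theorem stmt_5 {P G : Type*} [Monoid P] [Group G] [DecidableEq P]
    (φ : P →* G) (hφ : Function.Injective φ)
    (V : P → (lp (fun _ : P => ℂ) 2 →L[ℂ] lp (fun _ : P => ℂ) 2))
    (hV : ∀ r x : P, V r (lp.single 2 x (1 : ℂ)) = lp.single 2 (r * x) (1 : ℂ))
    (m : ℕ) (p q : Fin m → P)
    (hword : (((List.finRange m).map fun i => (φ (p i))⁻¹ * φ (q i)).prod = (1 : G)))
    (X : Set P)
    (hX : X = List.foldl
      (fun S i => (fun z => q i * z) ⁻¹' ((fun z => p i * z) '' S))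
      (Set.univ : Set P) (List.finRange m))
    (E : lp (fun _ : P => ℂ) 2 →L[ℂ] lp (fun _ : P => ℂ) 2)
    (hE₁ : ∀ x ∈ X, E (lp.single 2 x (1 : ℂ)) = lp.single 2 x (1 : ℂ))
    (hE₂ : ∀ x ∉ X, E (lp.single 2 x (1 : ℂ)) = 0) :
    (((List.finRange m).map fun i =>
      (ContinuousLinearMap.adjoint (V (p i))) * (V (q i))).prod) = E := by
  classical
  have hinj : ∀ r a b : P, r * a = r * b → a = b := by
    intro r a b h
    apply hφ
    have : φ r * φ a = φ r * φ b := by rw [← map_mul, ← map_mul, h]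
    exact mul_left_cancel this
  -- key induction
  have key : ∀ L : List (Fin m), ∀ x : P,
      (x ∈ L.foldl (fun S i => (fun z => q i * z) ⁻¹' ((fun z => p i * z) '' S))
          (Set.univ : Set P) →
        ∃ z : P, φ z = ((L.map fun i => (φ (p i))⁻¹ * φ (q i)).prod) * φ x ∧
          ((L.map fun i =>
            (ContinuousLinearMap.adjoint (V (p i))) * (V (q i))).prod) (ε x) = ε z) ∧
      (x ∉ L.foldl (fun S i => (fun z => q i * z) ⁻¹' ((fun z => p i * z) '' S))
          (Set.univ : Set P) →
        ((L.map fun i =>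
          (ContinuousLinearMap.adjoint (V (p i))) * (V (q i))).prod) (ε x) = 0) := by
    intro L
    induction L using List.reverseRecOn with
    | nil =>
      intro x
      refine ⟨fun _ => ⟨x, by simp, by simp [ContinuousLinearMap.one_apply]⟩, fun hx => ?_⟩
      exact absurd (Set.mem_univ x) hx
    | append_singleton L i IH =>
      intro x
      have hfold : (L ++ [i]).foldl
          (fun S j => (fun z => q j * z) ⁻¹' ((fun z => p j * z) '' S)) Set.univ =
          (fun z => q i * z) ⁻¹' ((fun z => p i * z) ''
            (L.foldl (fun S j => (fun z => q j * z) ⁻¹' ((fun z => p j * z) '' S))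
              Set.univ)) := by
        simp [List.foldl_append]
      have hprod : (((L ++ [i]).map fun j =>
          (ContinuousLinearMap.adjoint (V (p j))) * (V (q j))).prod) =
          ((L.map fun j =>
            (ContinuousLinearMap.adjoint (V (p j))) * (V (q j))).prod) *
          ((ContinuousLinearMap.adjoint (V (p i))) * (V (q i))) := by
        simp [List.map_append]
      have hg : (((L ++ [i]).map fun j => (φ (p j))⁻¹ * φ (q j)).prod) =
          ((L.map fun j => (φ (p j))⁻¹ * φ (q j)).prod) * ((φ (p i))⁻¹ * φ (q i)) := by
        simp [List.map_append]
      set S := L.foldl (fun S j => (fun z => q j * z) ⁻¹' ((fun z => p j * z) '' S))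
        Set.univ with hS
      constructor
      · intro hx
        rw [hfold] at hx
        obtain ⟨y, hyS, hpy⟩ := hx
        have hAi : ((ContinuousLinearMap.adjoint (V (p i))) * (V (q i))) (ε x) = ε y := by
          rw [ContinuousLinearMap.mul_apply]
          have : V (q i) (ε x) = ε (q i * x) := hV _ _
          rw [this]
          exact adjoint_eps_eq (hinj (p i)) (V (p i)) (fun z => hV _ _) hpy.symm
        obtain ⟨z, hz, hWz⟩ := (IH y).1 hyS
        refine ⟨z, ?_, ?_⟩
        · rw [hg, hz]
          have hpy' : p i * y = q i * x := hpy
          have hy : φ y = (φ (p i))⁻¹ * φ (q i) * φ x := by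
            have h2 : φ (p i) * φ y = φ (q i) * φ x := by
              rw [← map_mul, ← map_mul, hpy']
            rw [mul_assoc, ← h2]
            group
          rw [hy]
          group
        · rw [hprod, ContinuousLinearMap.mul_apply, hAi, hWz]
      · intro hx
        rw [hfold] at hx
        rw [hprod, ContinuousLinearMap.mul_apply]
        by_cases hcase : ∃ y : P, p i * y = q i * x
        · obtain ⟨y, hy⟩ := hcase
          have hyS : y ∉ S := fun hyS => hx ⟨y, hyS, hy⟩
          have hAi : ((ContinuousLinearMap.adjoint (V (p i))) * (V (q i))) (ε x) = ε y := by
            rw [ContinuousLinearMap.mul_apply]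
            rw [show V (q i) (ε x) = ε (q i * x) from hV _ _]
            exact adjoint_eps_eq (hinj (p i)) (V (p i)) (fun z => hV _ _) hy.symm
          rw [hAi]
          exact (IH y).2 hyS
        · push_neg at hcase
          have hAi : ((ContinuousLinearMap.adjoint (V (p i))) * (V (q i))) (ε x) = 0 := by
            rw [ContinuousLinearMap.mul_apply]
            rw [show V (q i) (ε x) = ε (q i * x) from hV _ _]
            exact adjoint_eps_zero (V (p i)) (fun z => hV _ _)
              (fun z h => hcase z h)
          rw [hAi]
          simp
  -- conclusion on basis vectors
  set W := (((List.finRange m).map fun i =>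
      (ContinuousLinearMap.adjoint (V (p i))) * (V (q i))).prod) with hW
  have hbasis : ∀ x : P, W (ε x) = E (ε x) := by
    intro x
    by_cases hx : x ∈ X
    · obtain ⟨z, hz, hWz⟩ := (key (List.finRange m) x).1 (hX ▸ hx)
      rw [hword] at hz
      simp at hz
      have : z = x := hφ hz
      rw [hWz, this, ε, hE₁ x hx]
    · rw [(key (List.finRange m) x).2 (fun h => hx (hX ▸ h))]
      rw [ε, hE₂ x hx]
  -- density
  apply ContinuousLinearMap.ext
  intro f
  have hsum : HasSum (fun x : P => lp.single 2 x (f x)) f :=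
    lp.hasSum_single (by norm_num) f
  have h1 : HasSum (fun x : P => W (lp.single 2 x (f x))) (W f) := hsum.mapL W
  have h2 : HasSum (fun x : P => E (lp.single 2 x (f x))) (E f) := hsum.mapL E
  have heq : (fun x : P => W (lp.single 2 x (f x))) =
      (fun x : P => E (lp.single 2 x (f x))) := by
    funext x
    have : lp.single 2 x (f x) = (f x) • ε x := by
      rw [ε, ← lp.single_smul]
      norm_num
    rw [this, map_smul, map_smul, hbasis x]
  rw [heq] at h1
  exact h1.unique h2
end
end

section
/- Let P be a left cancellative monoid. For all p₁, q₁, …, p_m, q_m ∈ P and any subset X ⊆ P, one has q₁⁻¹ p₁ ⋯ q_m⁻¹ p_m p_m⁻¹ q_m ⋯ p₁⁻¹ q₁ X = (q₁⁻¹ p₁ ⋯ q_m⁻¹ p_m P) ∩ X, where juxtaposition denotes alternately taking images pY = {py : y ∈ Y} and preimages q⁻¹Y = {z ∈ P : qz ∈ Y} under left multiplication. -/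
noncomputable section

private lemma key {P : Type*} [Monoid P]
    (hcancel : ∀ p x y : P, p * x = p * y → x = y)
    (a b : P) (T X : Set P) :
    (fun z => b * z) ⁻¹' ((fun z => a * z) ''
      (T ∩ ((fun z => a * z) ⁻¹' ((fun z => b * z) '' X))))
    = ((fun z => b * z) ⁻¹' ((fun z => a * z) '' T)) ∩ X := by
  ext z
  simp only [Set.mem_preimage, Set.mem_image, Set.mem_inter_iff]
  constructor
  · rintro ⟨w, ⟨hwT, x, hxX, hx⟩, hz⟩
    have : z = x := hcancel b z x (hx.trans hz).symm
    exact ⟨⟨w, hwT, hz⟩, this ▸ hxX⟩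
  · rintro ⟨⟨w, hwT, hz⟩, hzX⟩
    exact ⟨w, ⟨hwT, z, hzX, hz.symm⟩, hz⟩

private lemma aux {P : Type*} [Monoid P]
    (hcancel : ∀ p x y : P, p * x = p * y → x = y)
    {ι : Type*} (p q : ι → P) (l : List ι) (X : Set P) :
    List.foldr (fun i S => (fun z => q i * z) ⁻¹' ((fun z => p i * z) '' S))
      (List.foldl (fun S i => (fun z => p i * z) ⁻¹' ((fun z => q i * z) '' S)) X l) l
    = (List.foldr (fun i S => (fun z => q i * z) ⁻¹' ((fun z => p i * z) '' S))
        (Set.univ : Set P) l) ∩ X := by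
  induction l generalizing X with
  | nil => simp
  | cons a l ih =>
    simp only [List.foldr_cons, List.foldl_cons]
    rw [ih]
    have := key hcancel (p a) (q a)
      (List.foldr (fun i S => (fun z => q i * z) ⁻¹' ((fun z => p i * z) '' S))
        (Set.univ : Set P) l) X
    exact this

/-- In a left cancellative monoid `P`, for all `p₁, q₁, …, p_m, q_m ∈ P` and
`X ⊆ P`:
`q₁⁻¹ p₁ ⋯ q_m⁻¹ p_m p_m⁻¹ q_m ⋯ p₁⁻¹ q₁ X = (q₁⁻¹ p₁ ⋯ q_m⁻¹ p_m P) ∩ X`,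
where `pY = {py : y ∈ Y}` and `q⁻¹Y = {z ∈ P : qz ∈ Y}`, applied from right to left. -/
theorem stmt_6 {P : Type*} [Monoid P]
    (hcancel : ∀ p x y : P, p * x = p * y → x = y)
    (m : ℕ) (p q : Fin m → P) (X : Set P) :
    List.foldl (fun S i => (fun z => q i * z) ⁻¹' ((fun z => p i * z) '' S))
      (List.foldl (fun S i => (fun z => p i * z) ⁻¹' ((fun z => q i * z) '' S))
        X (List.finRange m))
      (List.finRange m).reverse
    = (List.foldl (fun S i => (fun z => q i * z) ⁻¹' ((fun z => p i * z) '' S))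
        (Set.univ : Set P) (List.finRange m).reverse) ∩ X := by
  rw [List.foldl_reverse, List.foldl_reverse]
  exact aux hcancel p q (List.finRange m) X
end
end

section
/- Let R be a Dedekind domain and I a nonzero ideal of R. Then there exist nonzero elements a, c ∈ R such that I = {r ∈ R : c·r ∈ a·R}, i.e., I is the preimage of the principal ideal aR under multiplication by c. Equivalently, I = ((c⁻¹a)·R) ∩ R inside the fraction field. -/
noncomputable section

set_option maxHeartbeats 1000000

open Ideal UniqueFactorizationMonoid

noncomputable section


private theorem sup_eq_top_of_isMaximal_of_not_le {R : Type*} [CommRing R]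
    (A P : Ideal R) (hPmax : P.IsMaximal) (hnotle : ¬ A ≤ P) : A ⊔ P = ⊤ := by
  by_contra hne
  obtain ⟨M, hMmax, hleM⟩ := Ideal.exists_le_maximal _ hne
  have hPM : P = M := hPmax.eq_of_le hMmax.ne_top (le_trans le_sup_right hleM)
  rw [hPM] at hnotle
  exact hnotle (le_trans le_sup_left hleM)

/-- In a Dedekind domain `R`, every nonzero ideal `I` is of the form
`I = {r ∈ R : c·r ∈ aR}` for some nonzero `a, c ∈ R`, i.e. `I` is the preimage of the
principal ideal `aR` under multiplication by `c`. -/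
theorem stmt_9 {R : Type*} [CommRing R] [IsDomain R] [IsDedekindDomain R]
    (I : Ideal R) (hI : I ≠ ⊥) :
    ∃ a c : R, a ≠ 0 ∧ c ≠ 0 ∧
      (I : Set R) = {r : R | c * r ∈ Ideal.span ({a} : Set R)} := by
  classical
  by_cases hItop : I = ⊤
  · refine ⟨1, 1, one_ne_zero, one_ne_zero, ?_⟩
    subst hItop
    simp [Ideal.span_singleton_one]
  -- choose a nonzero a ∈ I
  obtain ⟨a, haI, ha0⟩ := Submodule.exists_mem_ne_zero_of_ne_bot hI
  obtain ⟨J, hJ⟩ : I ∣ Ideal.span {a} := Ideal.dvd_span_singleton.mpr haI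
  have haR : Ideal.span ({a} : Set R) ≠ 0 := by
    simpa [Ideal.span_singleton_eq_bot] using ha0
  have hJ0 : J ≠ 0 := by
    rintro rfl; rw [mul_zero] at hJ; exact haR hJ
  have hI0 : I ≠ 0 := hI
  -- the finset of prime factors of I
  set s : Finset (Ideal R) := (normalizedFactors I).toFinset with hs_def
  have hmem_s : ∀ P : Ideal R, P ∈ s ↔ P.IsPrime ∧ I ≤ P := by
    intro P
    rw [hs_def, Multiset.mem_toFinset, Ideal.mem_normalizedFactors_iff hI]
  have hPne0 : ∀ P ∈ s, P ≠ ⊥ := fun P hP h0 =>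
    hI (le_bot_iff.mp (h0 ▸ ((hmem_s P).mp hP).2))
  -- auxiliary ideals
  set Q : Ideal R → Ideal R := fun P => J * ∏ P' ∈ s.erase P, P' with hQ_def
  have hQ0 : ∀ P ∈ s, Q P ≠ 0 := by
    intro P hP
    refine mul_ne_zero hJ0 ?_
    rw [Finset.prod_ne_zero_iff]
    exact fun P' hP' => hPne0 P' (Finset.mem_of_mem_erase hP')
  -- choose elements x P ∈ Q P \ Q P * P
  have hexists : ∀ P ∈ s, ∃ x, x ∈ Q P ∧ x ∉ Q P * P := by
    intro P hP
    have hlt : Q P * P < Q P := by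
      refine lt_of_le_of_ne Ideal.mul_le_left ?_
      intro heq
      have : P = 1 := by
        have := mul_left_cancel₀ (hQ0 P hP) (heq.trans (mul_one (Q P)).symm)
        exact this
      exact ((hmem_s P).mp hP).1.ne_top (by simpa [Ideal.one_eq_top] using this)
    obtain ⟨x, hx1, hx2⟩ := SetLike.exists_of_lt hlt
    exact ⟨x, hx1, hx2⟩
  choose! x hx1 hx2 using hexists
  set c : R := ∑ P ∈ s, x P with hc_def
  have hcJ : c ∈ J := by
    refine Ideal.sum_mem _ fun P hP => ?_
    exact Ideal.mul_le_left (hx1 P hP)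
  -- key avoidance property
  have hkey : ∀ P ∈ s, c ∉ J * P := by
    intro P hP hc
    have hPprime := ((hmem_s P).mp hP).1
    have hPmax : P.IsMaximal := Ideal.IsPrime.isMaximal hPprime (hPne0 P hP)
    -- all other summands are in J * P
    have hothers : ∀ P' ∈ s.erase P, x P' ∈ J * P := by
      intro P' hP'
      have hPmem : P ∈ s.erase P' := by
        rcases Finset.mem_erase.mp hP' with ⟨hne, hP's⟩
        exact Finset.mem_erase.mpr ⟨fun h => hne h.symm, hP⟩
      have hprodle : (∏ P'' ∈ s.erase P', P'') ≤ P := by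
        rw [← Finset.mul_prod_erase _ _ hPmem]
        exact Ideal.mul_le_left
      exact Ideal.mul_mono_right hprodle (hx1 P' (Finset.mem_of_mem_erase hP'))
    have hxP : x P ∈ J * P := by
      have : c - ∑ P' ∈ s.erase P, x P' ∈ J * P :=
        Submodule.sub_mem _ hc (Ideal.sum_mem _ hothers)
      rwa [hc_def, ← Finset.add_sum_erase _ _ hP, add_sub_cancel_right] at this
    -- Q P ⊓ J * P = Q P * P
    have hcop : (∏ P' ∈ s.erase P, P') ⊔ P = ⊤ := by
      have hnotle : ¬(∏ P' ∈ s.erase P, P') ≤ P := by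
        intro hle
        obtain ⟨P', hP', hle'⟩ := (Ideal.IsPrime.prod_le hPprime).mp hle
        have hP'prime := ((hmem_s P').mp (Finset.mem_of_mem_erase hP')).1
        have hP'max : P'.IsMaximal :=
          Ideal.IsPrime.isMaximal hP'prime (hPne0 P' (Finset.mem_of_mem_erase hP'))
        exact (Finset.mem_erase.mp hP').1 (hP'max.eq_of_le hPprime.ne_top hle')
      exact sup_eq_top_of_isMaximal_of_not_le _ _ hPmax hnotle
    have hinf : Q P ⊓ (J * P) = Q P * P := by
      have h1 : (∏ P' ∈ s.erase P, P') ⊓ P = (∏ P' ∈ s.erase P, P') * P := by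
        have := Ideal.sup_mul_inf (∏ P' ∈ s.erase P, P') P
        rwa [hcop, top_mul] at this
      calc Q P ⊓ (J * P) = lcm (J * ∏ P' ∈ s.erase P, P') (J * P) := by
            rw [lcm_eq_inf]
        _ = normalize J * lcm (∏ P' ∈ s.erase P, P') P := lcm_mul_left _ _ _
        _ = J * ((∏ P' ∈ s.erase P, P') ⊓ P) := by rw [normalize_eq, lcm_eq_inf]
        _ = Q P * P := by rw [h1, hQ_def, mul_assoc]
    exact hx2 P hP (hinf ▸ Submodule.mem_inf.mpr ⟨hx1 P hP, hxP⟩)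
  -- s is nonempty, hence c ≠ 0
  have hsne : s.Nonempty := by
    rw [Finset.nonempty_iff_ne_empty]
    intro hse
    have h0 : normalizedFactors I = 0 := by
      rw [hs_def, Multiset.toFinset_eq_empty] at hse; exact hse
    have hI1 : I = 1 := by
      rw [← _root_.prod_normalizedFactors_eq_self hI, h0, Multiset.prod_zero]
    exact hItop (by simpa [Ideal.one_eq_top] using hI1)
  obtain ⟨P₀, hP₀⟩ := hsne
  have hc0 : c ≠ 0 := fun h => hkey P₀ hP₀ (h ▸ Submodule.zero_mem _)
  -- write cR = J * L
  obtain ⟨L, hL⟩ : J ∣ Ideal.span {c} := Ideal.dvd_span_singleton.mpr hcJ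
  have hIL : IsCoprime I L := by
    rw [Ideal.isCoprime_iff_sup_eq]
    by_contra hne
    obtain ⟨P, hPmax, hle⟩ := Ideal.exists_le_maximal _ hne
    have hPs : P ∈ s := (hmem_s P).mpr ⟨hPmax.isPrime, le_trans le_sup_left hle⟩
    refine hkey P hPs ?_
    have : Ideal.span {c} ≤ J * P := by
      rw [hL]
      exact Ideal.mul_mono_right (le_trans le_sup_right hle)
    exact this (Ideal.mem_span_singleton_self c)
  refine ⟨a, c, ha0, hc0, ?_⟩
  ext r
  simp only [Set.mem_setOf_eq, SetLike.mem_coe]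
  constructor
  · intro hr
    rw [hJ, mul_comm c r]
    exact Ideal.mul_mem_mul hr hcJ
  · intro hcr
    have hdvd : Ideal.span ({a} : Set R) ∣ Ideal.span {c * r} :=
      Ideal.dvd_span_singleton.mpr hcr
    rw [hJ, ← Ideal.span_singleton_mul_span_singleton, hL, mul_comm I J,
      mul_assoc] at hdvd
    have hIdvd : I ∣ L * Ideal.span {r} :=
      (mul_dvd_mul_iff_left hJ0).mp hdvd
    have : I ∣ Ideal.span {r} := hIL.dvd_of_dvd_mul_left hIdvd
    exact Ideal.dvd_span_singleton.mp this
end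
end
end

section
/- Let P be a left cancellative monoid, and suppose there exists a net of unit vectors (ξ_i) in ℓ²(P) with ‖V_p ξ_i − ξ_i‖ → 0 for all p ∈ P. Then for all n ≥ 1 and p₁, q₁, …, p_n, q_n ∈ P, ⟨V_{p₁}* V_{q₁} ⋯ V_{p_n}* V_{q_n} ξ_i, ξ_i⟩ → 1. -/
noncomputable section

open scoped ComplexConjugate

set_option maxHeartbeats 1000000

section Stmt14Aux

variable {P : Type*} [Monoid P] [DecidableEq P]

/-- The standard basis vector of `ℓ²(P)`. -/
def stmt14e (x : P) : lp (fun _ : P => ℂ) 2 := lp.single 2 x 1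

lemma stmt14_onb : Orthonormal ℂ (stmt14e (P := P)) := by
  rw [orthonormal_iff_ite]
  intro i j
  rw [stmt14e, stmt14e, lp.inner_single_left]
  by_cases h : i = j
  · subst h
    simp [lp.single_apply_self]
  · rw [lp.single_apply, Pi.single_eq_of_ne h]
    simp [h]

lemma stmt14_norm_V (hcancel : ∀ p x y : P, p * x = p * y → x = y)
    (V : P → (lp (fun _ : P => ℂ) 2 →L[ℂ] lp (fun _ : P => ℂ) 2))
    (hV : ∀ p x : P, V p (lp.single 2 x (1 : ℂ)) = lp.single 2 (p * x) (1 : ℂ))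
    (p : P) (f : lp (fun _ : P => ℂ) 2) : ‖V p f‖ = ‖f‖ := by
  classical
  have hinj : Function.Injective (fun x : P => p * x) := fun x y h => hcancel p x y h
  have honb : Orthonormal ℂ (fun x : P => stmt14e (p * x)) :=
    stmt14_onb.comp _ hinj
  have hsum : HasSum (fun x : P => lp.single 2 x (f x)) f :=
    lp.hasSum_single (by norm_num) f
  have hrw : ∀ x : P, lp.single 2 x (f x) = (f x : ℂ) • stmt14e x := by
    intro x
    rw [stmt14e, ← lp.single_smul, smul_eq_mul, mul_one]
  have hnorm : ∀ s : Finset P,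
      ‖V p (∑ x ∈ s, lp.single 2 x (f x))‖ = ‖∑ x ∈ s, lp.single 2 x (f x)‖ := by
    intro s
    have h1 : V p (∑ x ∈ s, lp.single 2 x (f x))
        = ∑ x ∈ s, (f x : ℂ) • stmt14e (p * x) := by
      rw [map_sum]
      refine Finset.sum_congr rfl fun x _ => ?_
      rw [hrw x, map_smul]
      congr 1
      rw [stmt14e, stmt14e, hV]
    have h2 : (∑ x ∈ s, lp.single 2 x (f x))
        = ∑ x ∈ s, (f x : ℂ) • stmt14e x :=
      Finset.sum_congr rfl fun x _ => hrw x
    rw [h1, h2]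
    have e1 : ‖∑ x ∈ s, (f x : ℂ) • stmt14e (p * x)‖ ^ 2
        = ‖∑ x ∈ s, (f x : ℂ) • stmt14e x‖ ^ 2 := by
      rw [norm_sq_eq_re_inner (𝕜 := ℂ), norm_sq_eq_re_inner (𝕜 := ℂ), honb.inner_sum, stmt14_onb.inner_sum]
    exact (pow_left_inj₀ (norm_nonneg _) (norm_nonneg _) two_ne_zero).mp e1
  have h1 : Filter.Tendsto (fun s : Finset P => ‖∑ x ∈ s, lp.single 2 x (f x)‖)
      Filter.atTop (nhds ‖V p f‖) := by
    have := (((V p).continuous.tendsto f).comp hsum).norm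
    exact this.congr fun s => hnorm s
  exact tendsto_nhds_unique h1 hsum.norm

lemma stmt14_list {E : Type*} [NormedAddCommGroup E] [NormedSpace ℂ E]
    (L : List (E →L[ℂ] E)) (ξ : E) : (∀ T ∈ L, ‖T‖ ≤ 1) →
    ‖L.prod ξ - ξ‖ ≤ (L.map fun T => ‖T ξ - ξ‖).sum := by
  induction L with
  | nil => simp
  | cons T L ih =>
    intro hL
    simp only [List.prod_cons, List.map_cons, List.sum_cons, ContinuousLinearMap.mul_apply]
    calc ‖T (L.prod ξ) - ξ‖ ≤ ‖T (L.prod ξ) - T ξ‖ + ‖T ξ - ξ‖ :=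
          norm_sub_le_norm_sub_add_norm_sub _ _ _
    _ ≤ ‖L.prod ξ - ξ‖ + ‖T ξ - ξ‖ := by
        gcongr ?_ + _
        calc ‖T (L.prod ξ) - T ξ‖ = ‖T (L.prod ξ - ξ)‖ := by rw [map_sub]
        _ ≤ ‖T‖ * ‖L.prod ξ - ξ‖ := T.le_opNorm _
        _ ≤ 1 * ‖L.prod ξ - ξ‖ := by
            gcongr
            exact hL T (List.mem_cons_self)
        _ = ‖L.prod ξ - ξ‖ := one_mul _
    _ ≤ (L.map fun T => ‖T ξ - ξ‖).sum + ‖T ξ - ξ‖ := by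
        gcongr
        exact ih fun S hS => hL S (List.mem_cons_of_mem _ hS)
    _ = ‖T ξ - ξ‖ + (L.map fun T => ‖T ξ - ξ‖).sum := add_comm _ _

end Stmt14Aux

/-- Let `P` be a left cancellative monoid and `(ξ_i)` a net of unit vectors
in `ℓ²(P)` with `‖V_p ξ_i − ξ_i‖ → 0` for all `p ∈ P`. Then for all `n ≥ 1` and
`p₁, q₁, …, p_n, q_n ∈ P`, one has `⟨V_{p₁}* V_{q₁} ⋯ V_{p_n}* V_{q_n} ξ_i, ξ_i⟩ → 1`. -/
theorem stmt_14 {P : Type*} [Monoid P] [DecidableEq P]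
    (hcancel : ∀ p x y : P, p * x = p * y → x = y)
    (V : P → (lp (fun _ : P => ℂ) 2 →L[ℂ] lp (fun _ : P => ℂ) 2))
    (hV : ∀ p x : P, V p (lp.single 2 x (1 : ℂ)) = lp.single 2 (p * x) (1 : ℂ))
    (ι : Type*) (l : Filter ι) (hl : l.NeBot) (ξ : ι → lp (fun _ : P => ℂ) 2)
    (hξ : ∀ i, ‖ξ i‖ = 1)
    (hconv : ∀ p : P, Filter.Tendsto (fun i => ‖V p (ξ i) - ξ i‖) l (nhds 0)) :
    ∀ (n : ℕ), 1 ≤ n → ∀ p q : Fin n → P,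
      Filter.Tendsto
        (fun i => (inner ℂ
          ((((List.finRange n).map fun j =>
            (ContinuousLinearMap.adjoint (V (p j))) * (V (q j))).prod) (ξ i))
          (ξ i) : ℂ))
        l (nhds 1) := by
  intro n hn p q
  have hVnorm : ∀ r : P, ‖V r‖ ≤ 1 := fun r =>
    ContinuousLinearMap.opNorm_le_bound _ zero_le_one fun f => by
      rw [stmt14_norm_V hcancel V hV, one_mul]
  have hAnorm : ∀ r : P, ‖ContinuousLinearMap.adjoint (V r)‖ ≤ 1 := fun r => by
    rw [ContinuousLinearMap.adjoint.norm_map]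
    exact hVnorm r
  -- key adjoint estimate
  have hkey : ∀ (r : P) (i : ι),
      ‖ContinuousLinearMap.adjoint (V r) (ξ i) - ξ i‖ ≤
        Real.sqrt (2 * ‖V r (ξ i) - ξ i‖) := by
    intro r i
    set A := ContinuousLinearMap.adjoint (V r)
    have h1 : ‖A (ξ i)‖ ≤ 1 := by
      calc ‖A (ξ i)‖ ≤ ‖A‖ * ‖ξ i‖ := A.le_opNorm _
      _ ≤ 1 * 1 := mul_le_mul (hAnorm r) (le_of_eq (hξ i)) (norm_nonneg _) zero_le_one
      _ = 1 := one_mul _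
    have h2 : ‖A (ξ i) - ξ i‖ ^ 2 ≤ 2 * ‖V r (ξ i) - ξ i‖ := by
      have e1 : ‖A (ξ i) - ξ i‖ ^ 2
          = ‖A (ξ i)‖ ^ 2 - 2 * Complex.re (inner ℂ (A (ξ i)) (ξ i)) + ‖ξ i‖ ^ 2 :=
        @norm_sub_sq ℂ _ _ _ _ _ _
      have e2 : (inner ℂ (A (ξ i)) (ξ i) : ℂ) = inner ℂ (ξ i) (V r (ξ i)) :=
        ContinuousLinearMap.adjoint_inner_left (V r) _ _
      have e3 : (inner ℂ (ξ i) (V r (ξ i)) : ℂ)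
          = inner ℂ (ξ i) (ξ i) - inner ℂ (ξ i) (ξ i - V r (ξ i)) := by
        rw [inner_sub_right]; ring
      have e4 : (inner ℂ (ξ i) (ξ i) : ℂ) = (1 : ℂ) := by
        rw [@inner_self_eq_norm_sq_to_K ℂ, hξ i]
        norm_num
      have e5 : Complex.re (inner ℂ (ξ i) (ξ i - V r (ξ i)) : ℂ)
          ≤ ‖V r (ξ i) - ξ i‖ := by
        calc Complex.re (inner ℂ (ξ i) (ξ i - V r (ξ i)) : ℂ)
            ≤ ‖(inner ℂ (ξ i) (ξ i - V r (ξ i)) : ℂ)‖ := Complex.re_le_norm _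
        _ ≤ ‖ξ i‖ * ‖ξ i - V r (ξ i)‖ := norm_inner_le_norm _ _
        _ = ‖V r (ξ i) - ξ i‖ := by rw [hξ i, one_mul, norm_sub_rev]
      have e6 : Complex.re (inner ℂ (A (ξ i)) (ξ i) : ℂ)
          ≥ 1 - ‖V r (ξ i) - ξ i‖ := by
        rw [e2, e3, e4]
        simp only [Complex.sub_re, Complex.one_re]
        linarith [e5]
      have h1' : ‖A (ξ i)‖ ^ 2 ≤ 1 := by nlinarith [norm_nonneg (A (ξ i))]
      rw [e1, hξ i]
      nlinarith [e6]
    exact Real.le_sqrt_of_sq_le h2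
  -- norm bound on each factor
  have hfac : ∀ (j : Fin n) (i : ι),
      ‖(ContinuousLinearMap.adjoint (V (p j)) * V (q j)) (ξ i) - ξ i‖ ≤
        ‖V (q j) (ξ i) - ξ i‖ + Real.sqrt (2 * ‖V (p j) (ξ i) - ξ i‖) := by
    intro j i
    set A := ContinuousLinearMap.adjoint (V (p j))
    calc ‖A (V (q j) (ξ i)) - ξ i‖
        ≤ ‖A (V (q j) (ξ i)) - A (ξ i)‖ + ‖A (ξ i) - ξ i‖ :=
          norm_sub_le_norm_sub_add_norm_sub _ _ _
    _ ≤ ‖V (q j) (ξ i) - ξ i‖ + Real.sqrt (2 * ‖V (p j) (ξ i) - ξ i‖) := by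
        gcongr ?_ + ?_
        · calc ‖A (V (q j) (ξ i)) - A (ξ i)‖ = ‖A (V (q j) (ξ i) - ξ i)‖ := by rw [map_sub]
          _ ≤ ‖A‖ * ‖V (q j) (ξ i) - ξ i‖ := A.le_opNorm _
          _ ≤ 1 * ‖V (q j) (ξ i) - ξ i‖ := by gcongr; exact hAnorm (p j)
          _ = _ := one_mul _
        · exact hkey (p j) i
  have hg : Filter.Tendsto (fun i => ∑ j : Fin n,
      (‖V (q j) (ξ i) - ξ i‖ + Real.sqrt (2 * ‖V (p j) (ξ i) - ξ i‖))) l (nhds 0) := by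
    have h0 : (0 : ℝ) = ∑ _j : Fin n, (0 : ℝ) := by simp
    rw [h0]
    refine tendsto_finset_sum _ fun j _ => ?_
    have h1 := hconv (q j)
    have h2 : Filter.Tendsto (fun i => Real.sqrt (2 * ‖V (p j) (ξ i) - ξ i‖)) l (nhds 0) := by
      have hc : Filter.Tendsto (fun i => 2 * ‖V (p j) (ξ i) - ξ i‖) l (nhds (2 * 0)) :=
        (hconv (p j)).const_mul 2
      have hs := (Real.continuous_sqrt.tendsto (2 * 0)).comp hc
      simpa only [Function.comp_def, mul_zero, Real.sqrt_zero] using hs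
    simpa using h1.add h2
  have hbound : ∀ i,
      ‖(inner ℂ ((((List.finRange n).map fun j =>
          (ContinuousLinearMap.adjoint (V (p j))) * (V (q j))).prod) (ξ i)) (ξ i) : ℂ) - 1‖
        ≤ ∑ j : Fin n,
          (‖V (q j) (ξ i) - ξ i‖ + Real.sqrt (2 * ‖V (p j) (ξ i) - ξ i‖)) := by
    intro i
    set L : List (lp (fun _ : P => ℂ) 2 →L[ℂ] lp (fun _ : P => ℂ) 2) :=
      (List.finRange n).map fun j => (ContinuousLinearMap.adjoint (V (p j))) * (V (q j)) with hL_def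
    have hLnorm : ∀ T ∈ L, ‖T‖ ≤ 1 := by
      intro T hT
      rw [hL_def] at hT
      obtain ⟨j, _, rfl⟩ := List.mem_map.mp hT
      calc ‖ContinuousLinearMap.adjoint (V (p j)) * V (q j)‖
          ≤ ‖ContinuousLinearMap.adjoint (V (p j))‖ * ‖V (q j)‖ := norm_mul_le _ _
      _ ≤ 1 * 1 := mul_le_mul (hAnorm (p j)) (hVnorm (q j)) (norm_nonneg _) zero_le_one
      _ = 1 := one_mul _
    have e4 : (inner ℂ (ξ i) (ξ i) : ℂ) = (1 : ℂ) := by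
      rw [@inner_self_eq_norm_sq_to_K ℂ, hξ i]
      norm_num
    have e0 : (inner ℂ (L.prod (ξ i)) (ξ i) : ℂ) - 1 = inner ℂ (L.prod (ξ i) - ξ i) (ξ i) := by
      rw [inner_sub_left, e4]
    rw [e0]
    calc ‖(inner ℂ (L.prod (ξ i) - ξ i) (ξ i) : ℂ)‖
        ≤ ‖L.prod (ξ i) - ξ i‖ * ‖ξ i‖ := norm_inner_le_norm _ _
    _ = ‖L.prod (ξ i) - ξ i‖ := by rw [hξ i, mul_one]
    _ ≤ (L.map fun T => ‖T (ξ i) - ξ i‖).sum := stmt14_list L (ξ i) hLnorm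
    _ ≤ ∑ j : Fin n,
          (‖V (q j) (ξ i) - ξ i‖ + Real.sqrt (2 * ‖V (p j) (ξ i) - ξ i‖)) := by
        rw [hL_def, List.map_map, Fin.sum_univ_def]
        refine List.sum_le_sum ?_
        intro j hj
        exact hfac j i
  rw [tendsto_iff_norm_sub_tendsto_zero]
  exact squeeze_zero (fun i => norm_nonneg _) hbound hg
end
end

section
/- Let P be a cancellative monoid and suppose there exists a net of unit vectors (ξ_i) in finitely supported functions on P such that ⟨V_{p₁} V_{p₁}* V_{p₂} V_{p₂}* ξ_i, ξ_i⟩ → 1 for all p₁, p₂ ∈ P. Then P is left reversible: for all p₁, p₂ ∈ P, p₁P ∩ p₂P ≠ ∅. -/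
noncomputable section

/-- Let `P` be a cancellative monoid and suppose there is a net `(ξ_i)` of
finitely supported unit vectors in `ℓ²(P)` with
`⟨V_{p₁} V_{p₁}* V_{p₂} V_{p₂}* ξ_i, ξ_i⟩ → 1` for all `p₁, p₂ ∈ P`. Then `P` is left
reversible: `p₁P ∩ p₂P ≠ ∅` for all `p₁, p₂`. -/
theorem stmt_15 {P : Type*} [Monoid P] [DecidableEq P]
    (hlcancel : ∀ p x y : P, p * x = p * y → x = y)
    (hrcancel : ∀ p x y : P, x * p = y * p → x = y)
    (V : P → (lp (fun _ : P => ℂ) 2 →L[ℂ] lp (fun _ : P => ℂ) 2))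
    (hV : ∀ p x : P, V p (lp.single 2 x (1 : ℂ)) = lp.single 2 (p * x) (1 : ℂ))
    (ι : Type*) (l : Filter ι) (hl : l.NeBot) (ξ : ι → lp (fun _ : P => ℂ) 2)
    (hξ : ∀ i, ‖ξ i‖ = 1) (hfin : ∀ i, {x : P | ξ i x ≠ 0}.Finite)
    (hconv : ∀ p₁ p₂ : P,
      Filter.Tendsto
        (fun i => (inner ℂ
          (((V p₁ * ContinuousLinearMap.adjoint (V p₁) *
             (V p₂ * ContinuousLinearMap.adjoint (V p₂)))) (ξ i))
          (ξ i) : ℂ))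
        l (nhds 1)) :
    ∀ p₁ p₂ : P, ∃ a b : P, p₁ * a = p₂ * b := by
  -- coordinates of the adjoint
  have adj_apply : ∀ (p : P) (f : lp (fun _ : P => ℂ) 2) (x : P),
      (ContinuousLinearMap.adjoint (V p) f) x = f (p * x) := by
    intro p f x
    have h1 := lp.inner_single_left (𝕜 := ℂ) x (1 : ℂ)
      (ContinuousLinearMap.adjoint (V p) f)
    rw [ContinuousLinearMap.adjoint_inner_right (V p) _ f, hV,
      lp.inner_single_left (𝕜 := ℂ)] at h1
    simpa using h1.symm
  -- a finitely supported element is a finite sum of singles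
  have decomp : ∀ (f : lp (fun _ : P => ℂ) 2) (hf : {x : P | f x ≠ 0}.Finite),
      f = ∑ x ∈ hf.toFinset, lp.single 2 x (f x) := by
    intro f hf
    apply lp.ext
    funext y
    have single_apply' : ∀ (x : P) (c : ℂ),
        (lp.single 2 x c : lp (fun _ : P => ℂ) 2) y = if y = x then c else 0 := by
      intro x c
      rw [lp.single_apply]
      by_cases h : y = x
      · subst h; simp
      · simp [h]
    rw [lp.coeFn_sum, Finset.sum_apply]
    simp only [single_apply']
    rw [Finset.sum_ite_eq]
    by_cases hy : y ∈ hf.toFinset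
    · simp [hy]
    · simp only [hy, if_false]
      have : ¬ f y ≠ 0 := by simpa using hy
      simpa using this
  -- V p of a single with arbitrary value
  have Vsingle : ∀ (p x : P) (c : ℂ),
      V p (lp.single 2 x c) = lp.single 2 (p * x) c := by
    intro p x c
    have h1 : (lp.single 2 x c : lp (fun _ : P => ℂ) 2) = c • (lp.single 2 x (1 : ℂ) : lp (fun _ : P => ℂ) 2) := by
      have := lp.single_smul (E := fun _ : P => ℂ) 2 x (1 : ℂ) c
      rw [← lp.single_smul, smul_eq_mul, mul_one]
    have h2 : (lp.single 2 (p * x) c : lp (fun _ : P => ℂ) 2) = c • (lp.single 2 (p * x) (1 : ℂ) : lp (fun _ : P => ℂ) 2) := by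
      have := lp.single_smul (E := fun _ : P => ℂ) 2 (p * x) (1 : ℂ) c
      rw [← lp.single_smul, smul_eq_mul, mul_one]
    rw [h1, map_smul, hV, h2]
  -- V p of a finitely supported element vanishes off pP
  have Vcoord : ∀ (p : P) (g : lp (fun _ : P => ℂ) 2)
      (hg : {x : P | g x ≠ 0}.Finite) (y : P), (¬ ∃ x, p * x = y) → (V p g) y = 0 := by
    intro p g hg y hy
    rw [decomp g hg, map_sum]
    have : ∀ x ∈ hg.toFinset, V p (lp.single 2 x (g x)) y = 0 := by
      intro x _
      rw [Vsingle]
      apply lp.single_apply_ne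
      exact fun h => hy ⟨x, h.symm⟩
    calc (∑ x ∈ hg.toFinset, V p (lp.single 2 x (g x))) y
        = ∑ x ∈ hg.toFinset, (V p (lp.single 2 x (g x))) y := by
          rw [lp.coeFn_sum, Finset.sum_apply]
      _ = 0 := Finset.sum_eq_zero this
  intro p₁ p₂
  by_contra hcon
  push_neg at hcon
  -- the operator kills every ξ i
  have hzero : ∀ i,
      ((V p₁ * ContinuousLinearMap.adjoint (V p₁) *
        (V p₂ * ContinuousLinearMap.adjoint (V p₂)))) (ξ i) = 0 := by
    intro i
    have hmul : ∀ f, ((V p₁ * ContinuousLinearMap.adjoint (V p₁) *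
        (V p₂ * ContinuousLinearMap.adjoint (V p₂)))) f
        = V p₁ (ContinuousLinearMap.adjoint (V p₁)
            (V p₂ (ContinuousLinearMap.adjoint (V p₂) f))) := by
      intro f; rfl
    rw [hmul]
    -- the adjoint of V p₂ applied to ξ i is finitely supported
    set g := ContinuousLinearMap.adjoint (V p₂) (ξ i) with hgdef
    have hgfin : {x : P | g x ≠ 0}.Finite := by
      have hsub : {x : P | g x ≠ 0} ⊆ (fun x => p₂ * x) ⁻¹' {x : P | ξ i x ≠ 0} := by
        intro x hx
        simp only [Set.mem_preimage, Set.mem_setOf_eq]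
        rw [hgdef] at hx
        simpa [adj_apply p₂ (ξ i) x] using hx
      exact Set.Finite.subset ((hfin i).preimage
        (Set.injOn_of_injective (fun a b h => hlcancel p₂ a b h))) hsub
    -- adjoint of V p₁ kills V p₂ g
    have hkill : ContinuousLinearMap.adjoint (V p₁) (V p₂ g) = 0 := by
      apply lp.ext
      funext x
      rw [lp.coeFn_zero, Pi.zero_apply, adj_apply p₁ (V p₂ g) x]
      apply Vcoord p₂ g hgfin
      rintro ⟨b, hb⟩
      exact hcon x b hb.symm
    rw [hkill, map_zero]
  have h0 : Filter.Tendsto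
      (fun i => (inner ℂ
        (((V p₁ * ContinuousLinearMap.adjoint (V p₁) *
           (V p₂ * ContinuousLinearMap.adjoint (V p₂)))) (ξ i))
        (ξ i) : ℂ)) l (nhds 0) := by
    have : ∀ i, (inner ℂ
        (((V p₁ * ContinuousLinearMap.adjoint (V p₁) *
           (V p₂ * ContinuousLinearMap.adjoint (V p₂)))) (ξ i))
        (ξ i) : ℂ) = 0 := by
      intro i; rw [hzero i, inner_zero_left]
    simp only [this]
    exact tendsto_const_nhds
  exact one_ne_zero (tendsto_nhds_unique (hconv p₁ p₂) h0)
end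
end

section
/- Let P be a left reversible monoid embedded in a group (or more generally, a left cancellative monoid such that every constructible right ideal obtained from P by finitely many operations of left multiplication and preimage under left multiplication is nonempty). Then for all p, q ∈ P and every nonempty right ideal X of P, the set q⁻¹(pX) is nonempty; consequently every set of the form q_m⁻¹ p_m ⋯ q₁⁻¹ p₁ P is nonempty. -/
noncomputable section

/-- Let `P` be a left reversible monoid (`pP ∩ qP ≠ ∅` for all `p, q`). Then
for all `p, q ∈ P` and every nonempty right ideal `X ⊆ P`, the set `q⁻¹(pX)` is nonempty;
consequently, every constructible set `q_m⁻¹ p_m ⋯ q₁⁻¹ p₁ P` is nonempty. -/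
theorem stmt_18 {P : Type*} [Monoid P]
    (hrev : ∀ p q : P, ∃ a b : P, p * a = q * b) :
    (∀ p q : P, ∀ X : Set P, (∀ x ∈ X, ∀ r : P, x * r ∈ X) → X.Nonempty →
      ((fun z => q * z) ⁻¹' ((fun z => p * z) '' X)).Nonempty) ∧
    (∀ (m : ℕ) (p q : Fin m → P),
      (List.foldl (fun S i => (fun z => q i * z) ⁻¹' ((fun z => p i * z) '' S))
        (Set.univ : Set P) (List.finRange m)).Nonempty) := by
  have key : ∀ p q : P, ∀ X : Set P, (∀ x ∈ X, ∀ r : P, x * r ∈ X) → X.Nonempty →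
      ((fun z => q * z) ⁻¹' ((fun z => p * z) '' X)).Nonempty := by
    intro p q X hX ⟨x, hx⟩
    obtain ⟨a, b, hab⟩ := hrev (p * x) q
    exact ⟨b, ⟨x * a, hX x hx a, by simpa [mul_assoc] using hab⟩⟩
  refine ⟨key, ?_⟩
  intro m p q
  suffices h : ∀ (l : List (Fin m)) (S : Set P), (∀ x ∈ S, ∀ r : P, x * r ∈ S) → S.Nonempty →
      ((List.foldl (fun S i => (fun z => q i * z) ⁻¹' ((fun z => p i * z) '' S)) S l).Nonempty) by
    exact h _ _ (fun _ _ _ => trivial) ⟨1, trivial⟩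
  intro l
  induction l with
  | nil => intro S _ hS; exact hS
  | cons i l ih =>
    intro S hideal hne
    refine ih _ ?_ (key _ _ _ hideal hne)
    intro z hz r
    obtain ⟨x, hx, hqz⟩ := hz
    exact ⟨x * r, hideal x hx r, by simp only at hqz ⊢; rw [← mul_assoc, hqz, mul_assoc]⟩
end
end

section
/- Let R be a Dedekind domain and let P_R = R ⋊ R∖{0} be its ax+b-semigroup. Suppose (b+I) × (I∖{0}) = ⋃_{j=1}^n (b_j+I_j) × (I_j∖{0}) where I, I₁, …, I_n are nonzero ideals of R, b, b_j ∈ R, and each (b_j+I_j) × (I_j∖{0}) is a proper subset of (b+I) × (I∖{0}). Then a contradiction arises; i.e., the constructible right ideals of P_R, which are exactly the sets (b+I) × (I∖{0}) for b ∈ R and nonzero ideals I, together with ∅, are independent: such a union equality forces (b_j+I_j) × (I_j∖{0}) = (b+I) × (I∖{0}) for some j. -/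
noncomputable section

/-- The constructible right ideal `(b+I) × (I∖{0})` of the `ax+b`-semigroup
`P_R = R ⋊ (R∖{0})` over a domain `R`, viewed as a subset of `R × R`. -/
def axbIdeal {R : Type*} [CommRing R] (b : R) (I : Ideal R) : Set (R × R) :=
  ((fun x => b + x) '' (I : Set R)) ×ˢ {a : R | a ∈ I ∧ a ≠ 0}

lemma dedekind_ideal_independent {R : Type*} [CommRing R] [IsDomain R] [IsDedekindDomain R]
    {n : ℕ} (I : Ideal R) (hI : I ≠ ⊥) (II : Fin n → Ideal R) (hne : ∀ j, II j ≠ ⊥)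
    (hlt : ∀ j, II j < I) : ∃ x ∈ I, ∀ j, x ∉ II j := by
  classical
  have hdvd : ∀ j, I ∣ II j := fun j => Ideal.dvd_iff_le.mpr (hlt j).le
  choose C hC using hdvd
  have hCtop : ∀ j, C j ≠ ⊤ := by
    intro j h
    have h2 := hC j
    rw [h, Ideal.mul_top] at h2
    exact (hlt j).ne h2
  have hCbot : ∀ j, C j ≠ ⊥ := by
    intro j h
    apply hne j
    rw [hC j, h]
    exact Ideal.mul_bot I
  have hmax : ∀ j, ∃ P : Ideal R, P.IsMaximal ∧ C j ≤ P := fun j => by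
    obtain ⟨P, hP, hle⟩ := Ideal.exists_le_maximal (C j) (hCtop j)
    exact ⟨P, hP, hle⟩
  choose P hPmax hPle using hmax
  have hPbot : ∀ j, P j ≠ ⊥ := fun j h => hCbot j (le_bot_iff.mp (h ▸ hPle j))
  have hPprime : ∀ j, Prime (P j) := fun j =>
    Ideal.prime_of_isPrime (hPbot j) (hPmax j).isPrime
  have hS : ∀ Q : Ideal R, Q ∈ Finset.image P Finset.univ ↔ ∃ j, P j = Q := by
    intro Q; simp [Finset.mem_image]
  set S : Finset (Ideal R) := Finset.image P Finset.univ with hSdef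
  have hSmax : ∀ Q ∈ S, Q.IsMaximal ∧ Prime Q := by
    intro Q hQ
    obtain ⟨j, rfl⟩ := (hS Q).mp hQ
    exact ⟨hPmax j, hPprime j⟩
  have hxQ : ∀ Q ∈ S, ∃ x ∈ I * ∏ Q' ∈ S.erase Q, Q', x ∉ I * Q := by
    intro Q hQ
    rw [← SetLike.not_le_iff_exists]
    intro hle
    have h2 : I * Q ∣ I * ∏ Q' ∈ S.erase Q, Q' := Ideal.dvd_iff_le.mpr hle
    have h3 : Q ∣ ∏ Q' ∈ S.erase Q, Q' := (mul_dvd_mul_iff_left hI).mp h2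
    obtain ⟨Q', hQ', hdvd'⟩ := ((hSmax Q hQ).2.dvd_finset_prod_iff _).mp h3
    have hQQ' : Q' = Q := (hSmax Q' (Finset.mem_erase.mp hQ').2).1.eq_of_le
      (hSmax Q hQ).1.ne_top (Ideal.le_of_dvd hdvd')
    exact (Finset.mem_erase.mp hQ').1 hQQ'
  choose! xQ hxQmem hxQnot using hxQ
  refine ⟨∑ Q ∈ S, xQ Q, ?_, ?_⟩
  · exact Ideal.sum_mem I fun Q hQ => (Ideal.mul_le_left : I * ∏ Q' ∈ S.erase Q, Q' ≤ I) (hxQmem Q hQ)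
  · intro j hmem
    have hPj : P j ∈ S := (hS (P j)).mpr ⟨j, rfl⟩
    -- the j-th ideal sits inside I * P j
    have hIIle : II j ≤ I * P j := by
      rw [hC j]
      exact Ideal.mul_mono_right (hPle j)
    have hmem' : (∑ Q ∈ S, xQ Q) ∈ I * P j := hIIle hmem
    -- the other summands lie in I * P j
    have hrest : (∑ Q ∈ S.erase (P j), xQ Q) ∈ I * P j := by
      refine Ideal.sum_mem _ fun Q hQ => ?_
      have hQS : Q ∈ S := (Finset.mem_erase.mp hQ).2
      have hQne : Q ≠ P j := (Finset.mem_erase.mp hQ).1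
      have hPjmem : P j ∈ S.erase Q := Finset.mem_erase.mpr ⟨fun h => hQne h.symm, hPj⟩
      have : (∏ Q' ∈ S.erase Q, Q') ≤ P j :=
        Ideal.le_of_dvd (Finset.dvd_prod_of_mem _ hPjmem)
      exact Ideal.mul_mono_right this (hxQmem Q hQS)
    have hsum : (∑ Q ∈ S, xQ Q) = xQ (P j) + ∑ Q ∈ S.erase (P j), xQ Q :=
      (Finset.add_sum_erase S xQ hPj).symm
    have : xQ (P j) ∈ I * P j := by
      have := Ideal.sub_mem _ hmem' hrest
      rwa [hsum, add_sub_cancel_right] at this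
    exact hxQnot (P j) hPj this

lemma axbIdeal_eq_of {R : Type*} [CommRing R] (b c : R) (I : Ideal R) (h : c - b ∈ I) :
    axbIdeal c I = axbIdeal b I := by
  unfold axbIdeal
  congr 1
  ext z
  simp only [Set.mem_image, SetLike.mem_coe]
  constructor
  · rintro ⟨x, hx, rfl⟩
    exact ⟨(c - b) + x, I.add_mem h hx, by ring⟩
  · rintro ⟨x, hx, rfl⟩
    exact ⟨(b - c) + x, I.add_mem (by simpa using I.neg_mem h) hx, by ring⟩

/-- Let `R` be a Dedekind domain. The nonempty constructible right ideals
`(b+I) × (I∖{0})` of the `ax+b`-semigroup `P_R = R ⋊ (R∖{0})` are independent: if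
`(b+I) × (I∖{0}) = ⋃_j (b_j+I_j) × (I_j∖{0})` for nonzero ideals `I, I_j` and elements
`b, b_j ∈ R`, then `(b_j+I_j) × (I_j∖{0}) = (b+I) × (I∖{0})` for some `j`. -/
theorem stmt_19 {R : Type*} [CommRing R] [IsDomain R] [IsDedekindDomain R]
    (n : ℕ) (b : R) (I : Ideal R) (hI : I ≠ ⊥)
    (bb : Fin n → R) (II : Fin n → Ideal R) (hII : ∀ j, II j ≠ ⊥)
    (hunion : axbIdeal b I = ⋃ j, axbIdeal (bb j) (II j)) :
    ∃ j, axbIdeal (bb j) (II j) = axbIdeal b I := by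
  have hsub : ∀ j, axbIdeal (bb j) (II j) ⊆ axbIdeal b I := by
    intro j
    rw [hunion]
    exact Set.subset_iUnion (fun j => axbIdeal (bb j) (II j)) j
  have ha : ∀ j, ∃ a : R, a ∈ II j ∧ a ≠ 0 := fun j =>
    Submodule.exists_mem_ne_zero_of_ne_bot (hII j)
  choose a haII ha0 using ha
  have hmemj : ∀ j, (bb j, a j) ∈ axbIdeal (bb j) (II j) := fun j =>
    ⟨⟨0, (II j).zero_mem, add_zero _⟩, haII j, ha0 j⟩
  have hdb : ∀ j, bb j - b ∈ I := by
    intro j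
    obtain ⟨⟨z, hz, hz'⟩, -⟩ := hsub j (hmemj j)
    have h2 : b + z = bb j := hz'
    rwa [show bb j - b = z by rw [← h2]; ring]
  have hle : ∀ j, II j ≤ I := by
    intro j x hx
    rcases eq_or_ne x 0 with rfl | hx0
    · exact I.zero_mem
    · have hm : (bb j, x) ∈ axbIdeal (bb j) (II j) :=
        ⟨⟨0, (II j).zero_mem, add_zero _⟩, hx, hx0⟩
      exact (hsub j hm).2.1
  have hcov : ∀ x : R, x ∈ I → x ≠ 0 → ∃ j, x ∈ II j := by
    intro x hx hx0
    have : (b, x) ∈ axbIdeal b I := ⟨⟨0, I.zero_mem, add_zero _⟩, hx, hx0⟩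
    rw [hunion] at this
    obtain ⟨j, hj⟩ := Set.mem_iUnion.mp this
    exact ⟨j, hj.2.1⟩
  by_contra hcon
  push_neg at hcon
  have hlt : ∀ j, II j < I := by
    intro j
    refine lt_of_le_of_ne (hle j) fun heq => hcon j ?_
    rw [heq]
    exact axbIdeal_eq_of b (bb j) I (hdb j)
  obtain ⟨x, hxI, hxnot⟩ := dedekind_ideal_independent I hI II hII hlt
  rcases eq_or_ne x 0 with rfl | hx0
  · obtain ⟨a0, ha0I, ha00⟩ := Submodule.exists_mem_ne_zero_of_ne_bot hI
    obtain ⟨j, -⟩ := hcov a0 ha0I ha00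
    exact hxnot j (II j).zero_mem
  · obtain ⟨j, hj⟩ := hcov x hxI hx0
    exact hxnot j hj
end
end
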